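/- Let I be a finite index set, let f : I×I×I → ℝ be totally symmetric and diagonal (f_{abc} = 0 unless a = b = c), and let l : I×I → ℝ be antisymmetric (l_{ab} = −l_{ba}). If the symmetrized constraint Σ_e f_{e(bc} l_{a)e} = 0 holds for all a, b, c ∈ I (round brackets denoting symmetrization over a, b, c), then f_{bbb} l_{ab} = 0 for all a, b ∈ I; in particular, if f_{bbb} ≠ 0 for every b, then l = 0. Consequently, massless spin-2 fields entering the antisymmetric nonabelian 1-2-2 coupling (with structure constants l_{[ab]}) cannot simultaneously carry nontrivial Einstein–Hilbert self-interactions (with diagonal structure constants f_{(abc)}). -/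
import Mathlib

/-!
STATEMENT 13.  Let `I` be a finite index set, let `f : I×I×I → ℝ` be totally
symmetric and diagonal (`f a b c = 0` unless `a = b = c`), and let
`l : I×I → ℝ` be antisymmetric.  If the symmetrized constraint
`∑_e f_{e(bc} l_{a)e} = 0` holds for all `a b c ∈ I` (round brackets denoting
symmetrization over `a, b, c`; since `f` is symmetric this is the vanishing of
`∑_e (f_{ebc} l_{ae} + f_{eca} l_{be} + f_{eab} l_{ce})`), then
`f_{bbb} l_{ab} = 0` for all `a, b ∈ I`; in particular, if `f_{bbb} ≠ 0` for
every `b`, then `l = 0`.  Consequently, massless spin-2 fields entering the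
antisymmetric nonabelian 1-2-2 coupling (structure constants `l_[ab]`)
cannot simultaneously carry nontrivial Einstein–Hilbert self-interactions
(diagonal structure constants `f_(abc)`).
-/

theorem no_coexistence_122_with_einstein_hilbert
    {I : Type*} [Fintype I]
    (f : I → I → I → ℝ) (l : I → I → ℝ)
    (hf_sym : ∀ (a b c : I) (σ : Equiv.Perm (Fin 3)),
      f a b c = f (![a, b, c] (σ 0)) (![a, b, c] (σ 1)) (![a, b, c] (σ 2)))
    (hf_diag : ∀ a b c : I, (a ≠ b ∨ b ≠ c ∨ a ≠ c) → f a b c = 0)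
    (hl_antisym : ∀ a b : I, l a b = - l b a)
    (hconstraint : ∀ a b c : I,
      ∑ e : I, (f e b c * l a e + f e c a * l b e + f e a b * l c e) = 0) :
    (∀ a b : I, f b b b * l a b = 0) ∧
    ((∀ b : I, f b b b ≠ 0) → l = 0) := by
  classical
  have hl_diag : ∀ a : I, l a a = 0 := by
    intro a
    have := hl_antisym a a
    linarith
  have key : ∀ a b : I, f b b b * l a b = 0 := by
    intro a b
    have h := hconstraint a b b
    have hsum : ∀ e : I, f e b b * l a e + f e b a * l b e + f e a b * l b e
        = if e = b then f b b b * l a b else 0 := by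
      intro e
      by_cases heb : e = b
      · subst heb
        simp only [if_pos rfl]
        by_cases hab : a = e
        · subst hab
          simp [hl_diag]
        · have h1 : f e e a = 0 := hf_diag e e a (Or.inr (Or.inl (Ne.symm hab)))
          have h2 : f e a e = 0 := hf_diag e a e (Or.inl (Ne.symm hab))
          rw [h1, h2]; simp
      · simp only [if_neg heb]
        have h1 : f e b b = 0 := hf_diag e b b (Or.inl heb)
        by_cases hea : e = a
        · subst hea
          have h2 : f e b e = 0 := hf_diag e b e (Or.inl heb)
          have h3 : f e e b = 0 := hf_diag e e b (Or.inr (Or.inl heb))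
          rw [h1, h2, h3]; ring
        · have h2 : f e b a = 0 := hf_diag e b a (Or.inl heb)
          have h3 : f e a b = 0 := hf_diag e a b (Or.inl hea)
          rw [h1, h2, h3]; ring
    rw [Finset.sum_congr rfl (fun e _ => hsum e)] at h
    simpa using h
  refine ⟨key, fun hne => ?_⟩
  funext a b
  have := key a b
  have := mul_eq_zero.mp this
  simp only [Pi.zero_apply]
  tauto
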